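/- (Discrete reconstruction formula.) With the discrete setup below, defining the discrete curvelet w_{aθb}(x) = (1/(L·L_a)) ∑_{ξ ∈ Ξ} e^{2πi (x−b)·ξ} g_{a,θ}(ξ), every function f : X → ℂ satisfies f(x) = ∑_{(a,θ) ∈ P} ∑_{b ∈ B} W_f(a,θ,b) w_{aθb}(x) (L_a/L_B)² for all x ∈ X. -/

import Mathlib

noncomputable section
open scoped Real
open Finset

/-- The discrete Fourier grid `Ξ = {(ξ₁,ξ₂) ∈ ℤ² : -L/2 ≤ ξᵢ < L/2}` (the conditions are
encoded as `-L ≤ 2ξᵢ < L`). -/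
def Xi (L : ℕ) : Finset (ℤ × ℤ) :=
  ((Finset.Ico (-(L : ℤ)) (L : ℤ)) ×ˢ (Finset.Ico (-(L : ℤ)) (L : ℤ))).filter
    (fun ξ => -(L : ℤ) ≤ 2 * ξ.1 ∧ 2 * ξ.1 < (L : ℤ) ∧ -(L : ℤ) ≤ 2 * ξ.2 ∧ 2 * ξ.2 < (L : ℤ))

/-- The discrete Fourier transform `f̂(ξ) = (1/L) ∑_{x ∈ X} e^{-2πi x·ξ} f(x)`, where the spatial
grid point indexed by `n ∈ (Fin L)²` is `x = (n₁/L, n₂/L)`. -/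
def dft (L : ℕ) (f : Fin L × Fin L → ℂ) (ξ : ℤ × ℤ) : ℂ :=
  (L : ℂ)⁻¹ * ∑ n : Fin L × Fin L,
    Complex.exp (-(2 * ↑π * Complex.I) *
        ((((n.1 : ℕ) : ℂ) * (ξ.1 : ℂ) + ((n.2 : ℕ) : ℂ) * (ξ.2 : ℂ)) / (L : ℂ))) * f n

/-- `L_a = a^{(s+t)/2}`. -/
def La (s t : ℝ) (p : ℝ × ℝ) : ℝ := p.1 ^ ((s + t) / 2)

/-- The discrete general curvelet transform
`W_f(a,θ,b) = (1/L_a) ∑_{ξ ∈ Ξ} e^{2πi b·ξ} g_{a,θ}(ξ) f̂(ξ)`, where the spatial sampling point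
indexed by `m ∈ (Fin L_B)²` is `b = (m₁/L_B, m₂/L_B)`. -/
def Wd (L LB : ℕ) (s t : ℝ) (g : ℝ × ℝ → ℤ × ℤ → ℝ) (p : ℝ × ℝ)
    (f : Fin L × Fin L → ℂ) (m : Fin LB × Fin LB) : ℂ :=
  ((La s t p : ℝ) : ℂ)⁻¹ * ∑ ξ ∈ Xi L,
    Complex.exp ((2 * ↑π * Complex.I) *
        ((((m.1 : ℕ) : ℂ) * (ξ.1 : ℂ) + ((m.2 : ℕ) : ℂ) * (ξ.2 : ℂ)) / (LB : ℂ))) *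
      ((g p ξ : ℝ) : ℂ) * dft L f ξ

/-- The discrete curvelet `w_{aθb}(x) = (1/(L·L_a)) ∑_{ξ ∈ Ξ} e^{2πi (x-b)·ξ} g_{a,θ}(ξ)`, with
`x = (n₁/L, n₂/L)` and `b = (m₁/L_B, m₂/L_B)`. -/
def wdisc (L LB : ℕ) (s t : ℝ) (g : ℝ × ℝ → ℤ × ℤ → ℝ) (p : ℝ × ℝ)
    (m : Fin LB × Fin LB) (n : Fin L × Fin L) : ℂ :=
  ((L : ℂ) * ((La s t p : ℝ) : ℂ))⁻¹ * ∑ ξ ∈ Xi L,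
    Complex.exp ((2 * ↑π * Complex.I) *
        (((((n.1 : ℕ) : ℝ) / L - ((m.1 : ℕ) : ℝ) / LB) * (ξ.1 : ℝ) +
            (((n.2 : ℕ) : ℝ) / L - ((m.2 : ℕ) : ℝ) / LB) * (ξ.2 : ℝ) : ℝ) : ℂ)) *
      ((g p ξ : ℝ) : ℂ)

lemma two_pi_I_ne_zero : (2 * ↑π * Complex.I : ℂ) ≠ 0 :=
  mul_ne_zero (mul_ne_zero two_ne_zero (Complex.ofReal_ne_zero.mpr Real.pi_ne_zero)) Complex.I_ne_zero

lemma exp_sum_range (N : ℕ) (hN : 0 < N) (k : ℤ) :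
    ∑ j ∈ Finset.range N, Complex.exp (2 * ↑π * Complex.I * ((j : ℂ) * (k : ℂ) / (N : ℂ))) =
      if (N : ℤ) ∣ k then (N : ℂ) else 0 := by
  have hNc : (N : ℂ) ≠ 0 := Nat.cast_ne_zero.mpr hN.ne'
  set z : ℂ := Complex.exp (2 * ↑π * Complex.I * ((k : ℂ) / (N : ℂ))) with hz
  have hterm : ∀ j : ℕ, Complex.exp (2 * ↑π * Complex.I * ((j : ℂ) * (k : ℂ) / (N : ℂ))) = z ^ j := by
    intro j
    rw [hz, ← Complex.exp_nat_mul]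
    ring_nf
  rw [Finset.sum_congr rfl (fun j _ => hterm j)]
  by_cases hdvd : (N : ℤ) ∣ k
  · obtain ⟨c, rfl⟩ := hdvd
    have hz1 : z = 1 := by
      rw [hz]
      have h2 : 2 * ↑π * Complex.I * (((N * c : ℤ) : ℂ) / (N : ℂ)) = (c : ℤ) * (2 * ↑π * Complex.I) := by
        push_cast
        field_simp
      rw [h2, Complex.exp_int_mul_two_pi_mul_I]
    rw [if_pos ⟨c, rfl⟩]
    simp [hz1]
  · have hzN : z ^ N = 1 := by
      rw [hz, ← Complex.exp_nat_mul]
      have h2 : (N : ℂ) * (2 * ↑π * Complex.I * ((k : ℂ) / (N : ℂ))) = (k : ℤ) * (2 * ↑π * Complex.I) := by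
        field_simp
      rw [h2, Complex.exp_int_mul_two_pi_mul_I]
    have hz1 : z ≠ 1 := by
      intro h
      rw [hz, Complex.exp_eq_one_iff] at h
      obtain ⟨c, hc⟩ := h
      apply hdvd
      refine ⟨c, ?_⟩
      rw [mul_comm ((c : ℂ)) _] at hc
      have hkN : (k : ℂ) / (N : ℂ) = (c : ℂ) := mul_left_cancel₀ two_pi_I_ne_zero hc
      have : (k : ℂ) = (N : ℂ) * (c : ℂ) := by
        field_simp at hkN
        linear_combination hkN
      exact_mod_cast this
    rw [geom_sum_eq hz1, hzN]
    simp [hdvd]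

lemma exp_sum_fin (N : ℕ) (hN : 0 < N) (k : ℤ) :
    ∑ j : Fin N, Complex.exp (2 * ↑π * Complex.I * (((j : ℕ) : ℂ) * (k : ℂ) / (N : ℂ))) =
      if (N : ℤ) ∣ k then (N : ℂ) else 0 := by
  rw [Fin.sum_univ_eq_sum_range (fun j : ℕ => Complex.exp (2 * ↑π * Complex.I * ((j : ℂ) * (k : ℂ) / (N : ℂ)))) N]
  exact exp_sum_range N hN k

lemma exp_sum_Ico (N : ℕ) (hN : 0 < N) (a k : ℤ) :
    ∑ ξ ∈ Finset.Ico a (a + (N : ℤ)), Complex.exp (2 * ↑π * Complex.I * ((ξ : ℂ) * (k : ℂ) / (N : ℂ))) =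
      if (N : ℤ) ∣ k then (N : ℂ) else 0 := by
  have hNc : (N : ℂ) ≠ 0 := Nat.cast_ne_zero.mpr hN.ne'
  have h1 : ∑ ξ ∈ Finset.Ico a (a + (N : ℤ)),
      Complex.exp (2 * ↑π * Complex.I * ((ξ : ℂ) * (k : ℂ) / (N : ℂ)))
      = ∑ j ∈ Finset.range N, Complex.exp (2 * ↑π * Complex.I * (((a + (j : ℤ)) : ℂ) * (k : ℂ) / (N : ℂ))) := by
    apply Finset.sum_bij' (fun ξ _ => (ξ - a).toNat) (fun j _ => a + (j : ℤ))
    · intro ξ hξ; simp only [Finset.mem_Ico] at hξ; simp only [Finset.mem_range]; omega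
    · intro j hj; simp only [Finset.mem_range] at hj; simp only [Finset.mem_Ico]; omega
    · intro ξ hξ; simp only [Finset.mem_Ico] at hξ; omega
    · intro j hj; simp only [Finset.mem_range] at hj; omega
    · intro ξ hξ
      simp only [Finset.mem_Ico] at hξ
      congr 2
      push_cast [Int.toNat_of_nonneg (by omega : (0:ℤ) ≤ ξ - a)]
      ring
  rw [h1]
  by_cases hdvd : (N : ℤ) ∣ k
  · obtain ⟨c, rfl⟩ := hdvd
    have hterm : ∀ j ∈ Finset.range N,
        Complex.exp (2 * ↑π * Complex.I * (((a + (j : ℤ)) : ℂ) * (((N : ℤ) * c : ℤ) : ℂ) / (N : ℂ))) = 1 := by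
      intro j _
      have h2 : 2 * ↑π * Complex.I * (((a + (j : ℤ)) : ℂ) * (((N : ℤ) * c : ℤ) : ℂ) / (N : ℂ))
          = ((a + j) * c : ℤ) * (2 * ↑π * Complex.I) := by
        push_cast; field_simp
      rw [h2, Complex.exp_int_mul_two_pi_mul_I]
    rw [Finset.sum_congr rfl hterm, if_pos ⟨c, rfl⟩]
    simp
  · have hterm : ∀ j ∈ Finset.range N,
        Complex.exp (2 * ↑π * Complex.I * (((a + (j : ℤ)) : ℂ) * (k : ℂ) / (N : ℂ)))
          = Complex.exp (2 * ↑π * Complex.I * ((a : ℂ) * (k : ℂ) / (N : ℂ)))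
            * Complex.exp (2 * ↑π * Complex.I * ((j : ℂ) * (k : ℂ) / (N : ℂ))) := by
      intro j _
      rw [← Complex.exp_add]
      congr 1
      push_cast
      field_simp
    rw [Finset.sum_congr rfl hterm, ← Finset.mul_sum, exp_sum_range N hN k]
    simp [hdvd]

lemma Xi_eq (L : ℕ) (hL : 0 < L) :
    Xi L = (Finset.Ico (-((L : ℤ) / 2)) (-((L : ℤ) / 2) + (L : ℤ))) ×ˢ
      (Finset.Ico (-((L : ℤ) / 2)) (-((L : ℤ) / 2) + (L : ℤ))) := by
  ext ⟨x, y⟩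
  simp only [Xi, Finset.mem_filter, Finset.mem_product, Finset.mem_Ico]
  omega

lemma key1 (L LB : ℕ) (hL : 0 < L) (hLB : 0 < LB) (n : Fin L × Fin L) (ξ ξ' : ℤ × ℤ) :
    ∑ m : Fin LB × Fin LB,
      Complex.exp ((2 * ↑π * Complex.I) *
          ((((m.1 : ℕ) : ℂ) * (ξ.1 : ℂ) + ((m.2 : ℕ) : ℂ) * (ξ.2 : ℂ)) / (LB : ℂ))) *
        Complex.exp ((2 * ↑π * Complex.I) *
          (((((n.1 : ℕ) : ℝ) / L - ((m.1 : ℕ) : ℝ) / LB) * (ξ'.1 : ℝ) +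
              (((n.2 : ℕ) : ℝ) / L - ((m.2 : ℕ) : ℝ) / LB) * (ξ'.2 : ℝ) : ℝ) : ℂ))
      = Complex.exp ((2 * ↑π * Complex.I) *
          ((((n.1 : ℕ) : ℂ) * (ξ'.1 : ℂ) + ((n.2 : ℕ) : ℂ) * (ξ'.2 : ℂ)) / (L : ℂ))) *
        ((if (LB : ℤ) ∣ ξ.1 - ξ'.1 then (LB : ℂ) else 0) *
          (if (LB : ℤ) ∣ ξ.2 - ξ'.2 then (LB : ℂ) else 0)) := by
  have hLc : (L : ℂ) ≠ 0 := Nat.cast_ne_zero.mpr hL.ne'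
  have hLBc : (LB : ℂ) ≠ 0 := Nat.cast_ne_zero.mpr hLB.ne'
  have hterm : ∀ m : Fin LB × Fin LB,
      Complex.exp ((2 * ↑π * Complex.I) *
          ((((m.1 : ℕ) : ℂ) * (ξ.1 : ℂ) + ((m.2 : ℕ) : ℂ) * (ξ.2 : ℂ)) / (LB : ℂ))) *
        Complex.exp ((2 * ↑π * Complex.I) *
          (((((n.1 : ℕ) : ℝ) / L - ((m.1 : ℕ) : ℝ) / LB) * (ξ'.1 : ℝ) +
              (((n.2 : ℕ) : ℝ) / L - ((m.2 : ℕ) : ℝ) / LB) * (ξ'.2 : ℝ) : ℝ) : ℂ))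
      = Complex.exp ((2 * ↑π * Complex.I) *
            ((((n.1 : ℕ) : ℂ) * (ξ'.1 : ℂ) + ((n.2 : ℕ) : ℂ) * (ξ'.2 : ℂ)) / (L : ℂ))) *
          (Complex.exp (2 * ↑π * Complex.I * (((m.1 : ℕ) : ℂ) * ((ξ.1 - ξ'.1 : ℤ) : ℂ) / (LB : ℂ))) *
            Complex.exp (2 * ↑π * Complex.I * (((m.2 : ℕ) : ℂ) * ((ξ.2 - ξ'.2 : ℤ) : ℂ) / (LB : ℂ)))) := by
    intro m
    rw [← Complex.exp_add, ← Complex.exp_add, ← Complex.exp_add]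
    congr 1
    push_cast
    field_simp
    ring
  rw [Finset.sum_congr rfl (fun m _ => hterm m), ← Finset.mul_sum]
  congr 1
  rw [← exp_sum_fin LB hLB (ξ.1 - ξ'.1), ← exp_sum_fin LB hLB (ξ.2 - ξ'.2),
    Finset.sum_mul_sum]
  rw [Fintype.sum_prod_type]

lemma key2 (L : ℕ) (hL : 0 < L) (n n' : Fin L × Fin L) :
    ∑ ξ ∈ Xi L,
      Complex.exp ((2 * ↑π * Complex.I) *
          ((((n.1 : ℕ) : ℂ) * (ξ.1 : ℂ) + ((n.2 : ℕ) : ℂ) * (ξ.2 : ℂ)) / (L : ℂ))) *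
        Complex.exp (-(2 * ↑π * Complex.I) *
          ((((n'.1 : ℕ) : ℂ) * (ξ.1 : ℂ) + ((n'.2 : ℕ) : ℂ) * (ξ.2 : ℂ)) / (L : ℂ)))
      = if n' = n then ((L : ℂ)) ^ 2 else 0 := by
  have hLc : (L : ℂ) ≠ 0 := Nat.cast_ne_zero.mpr hL.ne'
  have hterm : ∀ ξ : ℤ × ℤ,
      Complex.exp ((2 * ↑π * Complex.I) *
          ((((n.1 : ℕ) : ℂ) * (ξ.1 : ℂ) + ((n.2 : ℕ) : ℂ) * (ξ.2 : ℂ)) / (L : ℂ))) *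
        Complex.exp (-(2 * ↑π * Complex.I) *
          ((((n'.1 : ℕ) : ℂ) * (ξ.1 : ℂ) + ((n'.2 : ℕ) : ℂ) * (ξ.2 : ℂ)) / (L : ℂ)))
      = Complex.exp (2 * ↑π * Complex.I * ((ξ.1 : ℂ) * (((n.1 : ℕ) - (n'.1 : ℕ) : ℤ) : ℂ) / (L : ℂ))) *
        Complex.exp (2 * ↑π * Complex.I * ((ξ.2 : ℂ) * (((n.2 : ℕ) - (n'.2 : ℕ) : ℤ) : ℂ) / (L : ℂ))) := by
    intro ξ
    rw [← Complex.exp_add, ← Complex.exp_add]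
    congr 1
    push_cast
    field_simp
    ring
  rw [Finset.sum_congr rfl (fun ξ _ => hterm ξ), Xi_eq L hL, Finset.sum_product]
  simp only []
  rw [← Finset.sum_mul_sum, exp_sum_Ico L hL _ _, exp_sum_Ico L hL _ _]
  have hd : ∀ a b : Fin L, ((L : ℤ) ∣ (a : ℕ) - (b : ℕ)) ↔ a = b := by
    intro a b
    constructor
    · intro h
      have h1 : ((a : ℕ) : ℤ) - (b : ℕ) = 0 := by
        refine Int.eq_zero_of_abs_lt_dvd h ?_
        have := a.isLt; have := b.isLt
        rw [abs_lt]
        omega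
      have : (a : ℕ) = (b : ℕ) := by omega
      exact Fin.ext this
    · rintro rfl; simp
  by_cases h1 : n.1 = n'.1 <;> by_cases h2 : n.2 = n'.2
  · have : n' = n := by rw [Prod.ext_iff]; exact ⟨h1.symm, h2.symm⟩
    rw [if_pos ((hd _ _).mpr h1), if_pos ((hd _ _).mpr h2), if_pos this]
    ring
  · have : ¬ (n' = n) := fun h => h2 (by rw [h])
    rw [if_neg (fun h => h2 ((hd _ _).mp h)), if_neg this, mul_zero]
  · have : ¬ (n' = n) := fun h => h1 (by rw [h])
    rw [if_neg (fun h => h1 ((hd _ _).mp h)), if_neg this, zero_mul]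
  · have : ¬ (n' = n) := fun h => h1 (by rw [h])
    rw [if_neg (fun h => h1 ((hd _ _).mp h)), if_neg this, zero_mul]

lemma perp (L LB : ℕ) (hL : 0 < L) (hLB : 0 < LB) (s t : ℝ) (g : ℝ × ℝ → ℤ × ℤ → ℝ)
    (p : ℝ × ℝ) (hLa : La s t p ≠ 0)
    (hg2p : ∀ ξ ∈ Xi L, ∀ ξ' ∈ Xi L, ξ ≠ ξ' → g p ξ ≠ 0 → g p ξ' ≠ 0 →
      ¬(((LB : ℤ) ∣ ξ.1 - ξ'.1) ∧ ((LB : ℤ) ∣ ξ.2 - ξ'.2)))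
    (f : Fin L × Fin L → ℂ) (n : Fin L × Fin L) :
    ∑ m : Fin LB × Fin LB, Wd L LB s t g p f m * wdisc L LB s t g p m n *
        (((La s t p / (LB : ℝ)) ^ 2 : ℝ) : ℂ)
    = (L : ℂ)⁻¹ * ∑ ξ ∈ Xi L, (((g p ξ) ^ 2 : ℝ) : ℂ) * dft L f ξ *
        Complex.exp ((2 * ↑π * Complex.I) *
          ((((n.1 : ℕ) : ℂ) * (ξ.1 : ℂ) + ((n.2 : ℕ) : ℂ) * (ξ.2 : ℂ)) / (L : ℂ))) := by
  have hLc : (L : ℂ) ≠ 0 := Nat.cast_ne_zero.mpr hL.ne'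
  have hLBc : (LB : ℂ) ≠ 0 := Nat.cast_ne_zero.mpr hLB.ne'
  have hLac : ((La s t p : ℝ) : ℂ) ≠ 0 := Complex.ofReal_ne_zero.mpr hLa
  set A : Fin LB × Fin LB → ℤ × ℤ → ℂ := fun m ξ =>
    Complex.exp ((2 * ↑π * Complex.I) *
      ((((m.1 : ℕ) : ℂ) * (ξ.1 : ℂ) + ((m.2 : ℕ) : ℂ) * (ξ.2 : ℂ)) / (LB : ℂ))) with hA
  set B : Fin LB × Fin LB → ℤ × ℤ → ℂ := fun m ξ' =>
    Complex.exp ((2 * ↑π * Complex.I) *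
      (((((n.1 : ℕ) : ℝ) / L - ((m.1 : ℕ) : ℝ) / LB) * (ξ'.1 : ℝ) +
          (((n.2 : ℕ) : ℝ) / L - ((m.2 : ℕ) : ℝ) / LB) * (ξ'.2 : ℝ) : ℝ) : ℂ)) with hB
  set E : ℤ × ℤ → ℂ := fun ξ =>
    Complex.exp ((2 * ↑π * Complex.I) *
      ((((n.1 : ℕ) : ℂ) * (ξ.1 : ℂ) + ((n.2 : ℕ) : ℂ) * (ξ.2 : ℂ)) / (L : ℂ))) with hE
  set G : ℤ × ℤ → ℂ := fun ξ => ((g p ξ : ℝ) : ℂ) with hG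
  set F : ℤ × ℤ → ℂ := fun ξ => dft L f ξ with hF
  set la : ℂ := ((La s t p : ℝ) : ℂ) with hla
  set c : ℂ := (((La s t p / (LB : ℝ)) ^ 2 : ℝ) : ℂ) with hc
  set K : ℂ := la⁻¹ * ((L : ℂ) * la)⁻¹ * c with hK
  have hkey1 : ∀ ξ ξ' : ℤ × ℤ, ∑ m : Fin LB × Fin LB, A m ξ * B m ξ'
      = E ξ' * ((if (LB : ℤ) ∣ ξ.1 - ξ'.1 then (LB : ℂ) else 0) *
          (if (LB : ℤ) ∣ ξ.2 - ξ'.2 then (LB : ℂ) else 0)) :=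
    fun ξ ξ' => key1 L LB hL hLB n ξ ξ'
  calc
    ∑ m : Fin LB × Fin LB, Wd L LB s t g p f m * wdisc L LB s t g p m n * c
      = ∑ m : Fin LB × Fin LB, K * ((∑ ξ ∈ Xi L, A m ξ * G ξ * F ξ) *
          (∑ ξ' ∈ Xi L, B m ξ' * G ξ')) := by
        apply Finset.sum_congr rfl
        intro m _
        rw [Wd, wdisc, hK]
        ring
    _ = K * ∑ m : Fin LB × Fin LB, ∑ ξ ∈ Xi L, ∑ ξ' ∈ Xi L,
          (G ξ * F ξ * G ξ') * (A m ξ * B m ξ') := by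
        rw [← Finset.mul_sum]
        congr 1
        apply Finset.sum_congr rfl
        intro m _
        rw [Finset.sum_mul_sum]
        apply Finset.sum_congr rfl
        intro ξ _
        apply Finset.sum_congr rfl
        intro ξ' _
        ring
    _ = K * ∑ ξ ∈ Xi L, ∑ ξ' ∈ Xi L,
          (G ξ * F ξ * G ξ') * ∑ m : Fin LB × Fin LB, A m ξ * B m ξ' := by
        congr 1
        rw [Finset.sum_comm]
        apply Finset.sum_congr rfl
        intro ξ _
        rw [Finset.sum_comm]
        apply Finset.sum_congr rfl
        intro ξ' _
        rw [← Finset.mul_sum]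
    _ = K * ∑ ξ ∈ Xi L, G ξ ^ 2 * F ξ * E ξ * (LB : ℂ) ^ 2 := by
        congr 1
        apply Finset.sum_congr rfl
        intro ξ hξ
        rw [Finset.sum_congr rfl (fun ξ' _ => by rw [hkey1 ξ ξ'])]
        by_cases hg : g p ξ = 0
        · have hGz : G ξ = 0 := by rw [hG]; simp [hg]
          rw [hGz]
          simp
        · rw [Finset.sum_eq_single_of_mem ξ hξ]
          · rw [sub_self, sub_self, if_pos (dvd_zero (LB : ℤ))]
            ring
          · intro ξ' hξ' hne
            by_cases hg' : g p ξ' = 0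
            · have : G ξ' = 0 := by rw [hG]; simp [hg']
              rw [this]
              ring
            · rcases not_and_or.mp (hg2p ξ hξ ξ' hξ' (fun h => hne (h.symm)) hg hg') with h | h
              · rw [if_neg h]
                ring
              · rw [if_neg h]
                ring
    _ = (K * (LB : ℂ) ^ 2) * ∑ ξ ∈ Xi L, G ξ ^ 2 * F ξ * E ξ := by
        rw [← Finset.sum_mul]
        ring
    _ = (L : ℂ)⁻¹ * ∑ ξ ∈ Xi L, (((g p ξ) ^ 2 : ℝ) : ℂ) * F ξ * E ξ := by
        have hKL : K * (LB : ℂ) ^ 2 = (L : ℂ)⁻¹ := by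
          rw [hK, hc, hla]
          push_cast
          field_simp
          ring
          exact mul_inv_cancel₀ hLac
        rw [hKL]
        congr 1
        apply Finset.sum_congr rfl
        intro ξ _
        rw [hG]
        push_cast
        ring

/-- Discrete reconstruction formula. With windows `g_{a,θ}` that are
non-negative, satisfy `∑_{(a,θ) ∈ P} g_{a,θ}(ξ)² = 1` on `Ξ`, and whose supports contain no two
distinct frequencies congruent mod `L_B` in both coordinates, every `f : X → ℂ` satisfies
`f(x) = ∑_{(a,θ) ∈ P} ∑_{b ∈ B} W_f(a,θ,b) w_{aθb}(x) (L_a/L_B)²` for all `x ∈ X`. -/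
theorem statement11 (L LB : ℕ) (hL : 0 < L) (hLB : 0 < LB)
    (s t : ℝ) (hs : 1 / 2 < s) (hst : s < t) (ht : t < 1)
    (P : Finset (ℝ × ℝ)) (hP : ∀ p ∈ P, 1 ≤ p.1)
    (g : ℝ × ℝ → ℤ × ℤ → ℝ)
    (hg0 : ∀ p ∈ P, ∀ ξ ∈ Xi L, 0 ≤ g p ξ)
    (hg1 : ∀ ξ ∈ Xi L, ∑ p ∈ P, (g p ξ) ^ 2 = 1)
    (hg2 : ∀ p ∈ P, ∀ ξ ∈ Xi L, ∀ ξ' ∈ Xi L, ξ ≠ ξ' → g p ξ ≠ 0 → g p ξ' ≠ 0 →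
      ¬(((LB : ℤ) ∣ ξ.1 - ξ'.1) ∧ ((LB : ℤ) ∣ ξ.2 - ξ'.2)))
    (f : Fin L × Fin L → ℂ) :
    ∀ n : Fin L × Fin L,
      f n = ∑ p ∈ P, ∑ m : Fin LB × Fin LB,
        Wd L LB s t g p f m * wdisc L LB s t g p m n *
          (((La s t p / (LB : ℝ)) ^ 2 : ℝ) : ℂ) := by
  intro n
  have hLc : (L : ℂ) ≠ 0 := Nat.cast_ne_zero.mpr hL.ne'
  set E : ℤ × ℤ → ℂ := fun ξ =>
    Complex.exp ((2 * ↑π * Complex.I) *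
      ((((n.1 : ℕ) : ℂ) * (ξ.1 : ℂ) + ((n.2 : ℕ) : ℂ) * (ξ.2 : ℂ)) / (L : ℂ))) with hE
  have hperp : ∀ p ∈ P, ∑ m : Fin LB × Fin LB,
      Wd L LB s t g p f m * wdisc L LB s t g p m n *
        (((La s t p / (LB : ℝ)) ^ 2 : ℝ) : ℂ)
      = (L : ℂ)⁻¹ * ∑ ξ ∈ Xi L, (((g p ξ) ^ 2 : ℝ) : ℂ) * dft L f ξ * E ξ := by
    intro p hp
    have hpa : (0 : ℝ) < p.1 := lt_of_lt_of_le one_pos (hP p hp)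
    have hLa : La s t p ≠ 0 := by
      rw [La]
      positivity
    exact perp L LB hL hLB s t g p hLa (hg2 p hp) f n
  rw [Finset.sum_congr rfl hperp]
  have hswap : ∑ p ∈ P, (L : ℂ)⁻¹ * ∑ ξ ∈ Xi L, (((g p ξ) ^ 2 : ℝ) : ℂ) * dft L f ξ * E ξ
      = (L : ℂ)⁻¹ * ∑ ξ ∈ Xi L, dft L f ξ * E ξ := by
    rw [← Finset.mul_sum]
    congr 1
    rw [Finset.sum_comm]
    apply Finset.sum_congr rfl
    intro ξ hξ
    have : ∑ p ∈ P, (((g p ξ) ^ 2 : ℝ) : ℂ) * dft L f ξ * E ξ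
        = ((∑ p ∈ P, ((g p ξ) ^ 2 : ℝ) : ℝ) : ℂ) * (dft L f ξ * E ξ) := by
      push_cast
      rw [Finset.sum_mul]
      apply Finset.sum_congr rfl
      intro p _
      ring
    rw [this, hg1 ξ hξ]
    push_cast
    ring
  rw [hswap]
  -- Fourier inversion
  have hinv : ∀ ξ : ℤ × ℤ, dft L f ξ * E ξ
      = (L : ℂ)⁻¹ * ∑ n' : Fin L × Fin L, (E ξ *
          Complex.exp (-(2 * ↑π * Complex.I) *
            ((((n'.1 : ℕ) : ℂ) * (ξ.1 : ℂ) + ((n'.2 : ℕ) : ℂ) * (ξ.2 : ℂ)) / (L : ℂ)))) * f n' := by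
    intro ξ
    rw [dft, mul_assoc]
    congr 1
    rw [Finset.sum_mul]
    apply Finset.sum_congr rfl
    intro n' _
    ring
  rw [Finset.sum_congr rfl (fun ξ _ => hinv ξ), ← Finset.mul_sum, Finset.sum_comm]
  have hcol : ∑ n' : Fin L × Fin L, ∑ ξ ∈ Xi L, (E ξ *
        Complex.exp (-(2 * ↑π * Complex.I) *
          ((((n'.1 : ℕ) : ℂ) * (ξ.1 : ℂ) + ((n'.2 : ℕ) : ℂ) * (ξ.2 : ℂ)) / (L : ℂ)))) * f n'
      = (L : ℂ) ^ 2 * f n := by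
    have hterm : ∀ n' : Fin L × Fin L, ∑ ξ ∈ Xi L, (E ξ *
          Complex.exp (-(2 * ↑π * Complex.I) *
            ((((n'.1 : ℕ) : ℂ) * (ξ.1 : ℂ) + ((n'.2 : ℕ) : ℂ) * (ξ.2 : ℂ)) / (L : ℂ)))) * f n'
        = (if n' = n then (L : ℂ) ^ 2 else 0) * f n' := by
      intro n'
      rw [← Finset.sum_mul, key2 L hL n n']
    calc ∑ n' : Fin L × Fin L, ∑ ξ ∈ Xi L, (E ξ *
          Complex.exp (-(2 * ↑π * Complex.I) *
            ((((n'.1 : ℕ) : ℂ) * (ξ.1 : ℂ) + ((n'.2 : ℕ) : ℂ) * (ξ.2 : ℂ)) / (L : ℂ)))) * f n'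
        = ∑ n' : Fin L × Fin L, (if n' = n then (L : ℂ) ^ 2 else 0) * f n' :=
          Finset.sum_congr rfl (fun n' _ => hterm n')
      _ = ∑ n' : Fin L × Fin L, (if n' = n then (L : ℂ) ^ 2 * f n' else 0) := by
          apply Finset.sum_congr rfl
          intro n' _
          rw [ite_mul, zero_mul]
      _ = (L : ℂ) ^ 2 * f n := by
          rw [Finset.sum_ite_eq' Finset.univ n (fun n' => (L : ℂ) ^ 2 * f n')]
          simp
  rw [hcol]
  field_simp
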